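/- arXiv:1505.07209 — 4 statements merged into one kernel-verified Lean document; each statement's English description precedes it below -/
import Mathlib

section
/- Let M be a pointed metric space. On the span of {δ_x : x ∈ M} in F(M), define ‖a‖_KR = inf { Σ |α_i| d(y_i, z_i) : a = Σ α_i (δ_{y_i} − δ_{z_i}) }. Then ‖·‖_KR coincides with the norm of F(M) (the dual norm inherited from Lip_0(M)*). -/
open Metric Set
open scoped NNReal ENNReal

/-- The space of real-valued Lipschitz functions on `M` vanishing at the base point `z`. -/
structure Lip0 {M : Type*} [MetricSpace M] (z : M) where
  toFun : M → ℝ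
  lipschitz' : ∃ K : ℝ≥0, LipschitzWith K toFun
  map_base' : toFun z = 0

namespace Lip0

variable {M : Type*} [MetricSpace M] {z : M}

instance : FunLike (Lip0 z) M ℝ where
  coe := Lip0.toFun
  coe_injective := by rintro ⟨f, _, _⟩ ⟨g, _, _⟩ h; simpa using h

@[simp] lemma coe_mk (f : M → ℝ) (h1 h2) : ⇑(⟨f, h1, h2⟩ : Lip0 z) = f := rfl

lemma map_base (f : Lip0 z) : f z = 0 := f.map_base'

instance : Zero (Lip0 z) := ⟨⟨0, ⟨0, LipschitzWith.const (0 : ℝ)⟩, rfl⟩⟩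

instance : Add (Lip0 z) :=
  ⟨fun f g => ⟨⇑f + ⇑g,
    ⟨f.lipschitz'.choose + g.lipschitz'.choose,
      f.lipschitz'.choose_spec.add g.lipschitz'.choose_spec⟩,
    by simp [map_base f, map_base g]⟩⟩

instance : Neg (Lip0 z) :=
  ⟨fun f => ⟨-⇑f, ⟨f.lipschitz'.choose, f.lipschitz'.choose_spec.neg⟩,
    by simp [map_base f]⟩⟩

lemma lip_const_smul {f : M → ℝ} {K : ℝ≥0} (h : LipschitzWith K f) (c : ℝ) :
    LipschitzWith (‖c‖₊ * K) (c • f) := by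
  rw [lipschitzWith_iff_dist_le_mul] at h ⊢
  intro x y
  calc dist ((c • f) x) ((c • f) y) = ‖c‖ * dist (f x) (f y) := by
        rw [Pi.smul_apply, Pi.smul_apply, dist_smul₀]
    _ ≤ ‖c‖ * (K * dist x y) := by
        apply mul_le_mul_of_nonneg_left (h x y) (norm_nonneg c)
    _ = (‖c‖₊ * K : ℝ≥0) * dist x y := by push_cast; ring

instance : SMul ℝ (Lip0 z) :=
  ⟨fun c f => ⟨c • ⇑f,
    ⟨‖c‖₊ * f.lipschitz'.choose, lip_const_smul f.lipschitz'.choose_spec c⟩,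
    by simp [map_base f]⟩⟩

instance : Sub (Lip0 z) := ⟨fun f g => f + -g⟩
instance : SMul ℕ (Lip0 z) := ⟨fun n f => (n : ℝ) • f⟩
instance : SMul ℤ (Lip0 z) := ⟨fun n f => (n : ℝ) • f⟩

@[simp] lemma coe_zero : ⇑(0 : Lip0 z) = 0 := rfl
@[simp] lemma coe_add (f g : Lip0 z) : ⇑(f + g) = ⇑f + ⇑g := rfl
@[simp] lemma coe_neg (f : Lip0 z) : ⇑(-f) = -⇑f := rfl
@[simp] lemma coe_smul (c : ℝ) (f : Lip0 z) : ⇑(c • f) = c • ⇑f := rfl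
@[simp] lemma coe_sub (f g : Lip0 z) : ⇑(f - g) = ⇑f - ⇑g := by
  show ⇑(f + -g) = _; ext x; simp [sub_eq_add_neg]

instance : AddCommGroup (Lip0 z) :=
  DFunLike.coe_injective.addCommGroup _ coe_zero coe_add coe_neg coe_sub
    (fun f n => by show ⇑((n : ℝ) • f) = _; ext x; simp)
    (fun f n => by show ⇑((n : ℝ) • f) = _; ext x; simp)

instance : Module ℝ (Lip0 z) := by
  refine Function.Injective.module ℝ (AddMonoidHom.mk' (fun (f : Lip0 z) => ⇑f) coe_add) ?_ ?_
  · exact DFunLike.coe_injective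
  · exact coe_smul

/-- The least Lipschitz constant. -/
noncomputable def lipConst (f : M → ℝ) : ℝ≥0 := sInf {K : ℝ≥0 | LipschitzWith K f}

lemma lipschitzWith_lipConst {f : M → ℝ} (h : ∃ K : ℝ≥0, LipschitzWith K f) :
    LipschitzWith (lipConst f) f := by
  rw [lipschitzWith_iff_dist_le_mul]
  intro x y
  rcases eq_or_ne x y with rfl | hxy
  · simp
  have hd : 0 < dist x y := dist_pos.2 hxy
  have h1 : (show ℝ≥0 from ⟨dist (f x) (f y) / dist x y, by positivity⟩) ≤ lipConst f := by
    apply le_csInf h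
    intro K hK
    rw [← NNReal.coe_le_coe]
    have hK' := lipschitzWith_iff_dist_le_mul.1 hK
    exact (div_le_iff₀ hd).2 (by simpa [mul_comm] using hK' x y)
  rw [← NNReal.coe_le_coe] at h1
  calc dist (f x) (f y) = dist (f x) (f y) / dist x y * dist x y := by field_simp
    _ ≤ (lipConst f : ℝ) * dist x y := by
        apply mul_le_mul_of_nonneg_right _ hd.le
        exact h1



lemma lipConst_le {f : M → ℝ} {K : ℝ≥0} (h : LipschitzWith K f) : lipConst f ≤ K :=
  csInf_le (OrderBot.bddBelow _) h

lemma dist_le_lipConst (f : Lip0 z) (x y : M) :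
    dist (f x) (f y) ≤ (lipConst ⇑f : ℝ) * dist x y :=
  lipschitzWith_iff_dist_le_mul.1 (lipschitzWith_lipConst f.lipschitz') x y

noncomputable instance : Norm (Lip0 z) := ⟨fun f => (lipConst ⇑f : ℝ)⟩

lemma norm_def (f : Lip0 z) : ‖f‖ = (lipConst ⇑f : ℝ) := rfl

lemma eq_zero_of_lipConst_eq_zero (f : Lip0 z) (h : lipConst ⇑f = 0) : f = 0 := by
  apply DFunLike.coe_injective
  ext x
  have h2 := dist_le_lipConst f x z
  rw [h, map_base f] at h2
  simp only [NNReal.coe_zero, zero_mul] at h2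
  have := dist_nonneg (x := f x) (y := (0:ℝ))
  simp only [coe_zero, Pi.zero_apply]
  have : dist (f x) (0:ℝ) = 0 := le_antisymm h2 dist_nonneg
  simpa [dist_eq_norm] using this

lemma lipConst_smul (c : ℝ) (f : Lip0 z) : lipConst ⇑(c • f) = ‖c‖₊ * lipConst ⇑f := by
  have le1 : ∀ (c : ℝ) (f : Lip0 z), lipConst ⇑(c • f) ≤ ‖c‖₊ * lipConst ⇑f := by
    intro c f
    exact lipConst_le (lip_const_smul (lipschitzWith_lipConst f.lipschitz') c)
  rcases eq_or_ne c 0 with rfl | hc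
  · simp only [nnnorm_zero, zero_mul]
    refine le_antisymm ?_ zero_le
    have : (0:ℝ) • f = (0 : Lip0 z) := zero_smul ℝ f
    calc lipConst ⇑((0:ℝ) • f) ≤ ‖(0:ℝ)‖₊ * lipConst ⇑f := le1 0 f
      _ = 0 := by simp
  · refine le_antisymm (le1 c f) ?_
    have h2 := le1 c⁻¹ (c • f)
    rw [inv_smul_smul₀ hc] at h2
    have hcpos : (0:ℝ≥0) < ‖c‖₊ := by simpa using hc
    calc ‖c‖₊ * lipConst ⇑f ≤ ‖c‖₊ * (‖c⁻¹‖₊ * lipConst ⇑(c • f)) := by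
          exact mul_le_mul_of_nonneg_left h2 zero_le
      _ = lipConst ⇑(c • f) := by
          rw [← mul_assoc]
          have : ‖c‖₊ * ‖c⁻¹‖₊ = 1 := by
            rw [← nnnorm_mul, mul_inv_cancel₀ hc, nnnorm_one]
          rw [this, one_mul]

noncomputable def addGroupNorm (z : M) : AddGroupNorm (Lip0 z) where
  toFun f := (lipConst ⇑f : ℝ)
  map_zero' := by
    simp only [coe_zero]
    norm_cast
    exact le_antisymm (lipConst_le (LipschitzWith.const' (0:ℝ))) zero_le
  add_le' f g := by
    push_cast
    have : lipConst ⇑(f + g) ≤ lipConst ⇑f + lipConst ⇑g := by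
      refine lipConst_le ?_
      exact (lipschitzWith_lipConst f.lipschitz').add (lipschitzWith_lipConst g.lipschitz')
    exact_mod_cast this
  neg' f := by
    have h : (-⇑f : M → ℝ) = ⇑((-1 : ℝ) • f) := by ext x; simp
    show (lipConst ⇑(-f) : ℝ) = (lipConst ⇑f : ℝ)
    rw [coe_neg, h, lipConst_smul]
    simp
  eq_zero_of_map_eq_zero' f h := by
    apply eq_zero_of_lipConst_eq_zero
    have h' : (lipConst ⇑f : ℝ) = 0 := h
    exact_mod_cast h'

noncomputable instance : NormedAddCommGroup (Lip0 z) :=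
  (addGroupNorm z).toNormedAddCommGroup

noncomputable instance : NormedSpace ℝ (Lip0 z) where
  norm_smul_le c f := by
    show (lipConst ⇑(c • f) : ℝ) ≤ ‖c‖ * (lipConst ⇑f : ℝ)
    rw [lipConst_smul]
    push_cast
    simp [Real.norm_eq_abs]

end Lip0

section FreeSpace

variable {M : Type*} [MetricSpace M]

/-- The evaluation functional `δ_x ∈ Lip_0(M)^*`. -/
noncomputable def dirac (z x : M) : StrongDual ℝ (Lip0 z) :=
  LinearMap.mkContinuous
    { toFun := fun f => f x
      map_add' := by intro f g; simp
      map_smul' := by intro c f; simp }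
    (dist x z)
    (by
      intro f
      have := Lip0.dist_le_lipConst f x z
      rw [Lip0.map_base f, dist_zero_right] at this
      show ‖f x‖ ≤ dist x z * (Lip0.lipConst ⇑f : ℝ)
      simpa [Lip0.norm_def, mul_comm] using this)

@[simp] lemma dirac_apply (z x : M) (f : Lip0 z) : dirac z x f = f x := rfl

/-- The Lipschitz-free space over `M` with base point `z`: the closed linear span of
the evaluation functionals inside `Lip_0(M)^*`. -/
noncomputable def FreeSpace (z : M) : Submodule ℝ (StrongDual ℝ (Lip0 z)) :=
  (Submodule.span ℝ (Set.range (dirac z))).topologicalClosure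

/-- The canonical embedding `δ : M → F(M)`. -/
noncomputable def diracF (z x : M) : FreeSpace z :=
  ⟨dirac z x, Submodule.le_topologicalClosure _ (Submodule.subset_span ⟨x, rfl⟩)⟩

end FreeSpace

section KRproof

variable {M : Type*} [MetricSpace M]

/-- The set of costs of representations of `a`. -/
def KRset (z : M) (a : StrongDual ℝ (Lip0 z)) : Set ℝ :=
  {r : ℝ | ∃ (k : ℕ) (α : Fin k → ℝ) (y w : Fin k → M),
      a = ∑ i, α i • (dirac z (y i) - dirac z (w i)) ∧
      r = ∑ i, |α i| * dist (y i) (w i)}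

lemma dirac_base (z : M) : dirac z z = 0 := by
  ext f; simp [Lip0.map_base]

lemma KRset_nonneg {z : M} {a : StrongDual ℝ (Lip0 z)} {r : ℝ}
    (h : r ∈ KRset z a) : 0 ≤ r := by
  obtain ⟨k, α, y, w, -, rfl⟩ := h
  exact Finset.sum_nonneg fun i _ => mul_nonneg (abs_nonneg _) dist_nonneg

lemma bddBelow_KRset (z : M) (a : StrongDual ℝ (Lip0 z)) : BddBelow (KRset z a) :=
  ⟨0, fun _ h => KRset_nonneg h⟩

lemma norm_dirac_sub_le (z x y : M) : ‖dirac z x - dirac z y‖ ≤ dist x y := by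
  apply ContinuousLinearMap.opNorm_le_bound _ dist_nonneg
  intro f
  have h := Lip0.dist_le_lipConst f x y
  rw [Real.dist_eq] at h
  calc ‖(dirac z x - dirac z y) f‖ = |f x - f y| := by
        simp [Real.norm_eq_abs]
    _ ≤ (Lip0.lipConst ⇑f : ℝ) * dist x y := h
    _ = dist x y * ‖f‖ := by rw [Lip0.norm_def]; ring

lemma norm_le_of_mem_KRset {z : M} {a : StrongDual ℝ (Lip0 z)} {r : ℝ}
    (h : r ∈ KRset z a) : ‖a‖ ≤ r := by
  obtain ⟨k, α, y, w, rfl, rfl⟩ := h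
  calc ‖∑ i, α i • (dirac z (y i) - dirac z (w i))‖
      ≤ ∑ i, ‖α i • (dirac z (y i) - dirac z (w i))‖ := norm_sum_le _ _
    _ ≤ ∑ i, |α i| * dist (y i) (w i) := by
        refine Finset.sum_le_sum fun i _ => ?_
        rw [norm_smul, Real.norm_eq_abs]
        exact mul_le_mul_of_nonneg_left (norm_dirac_sub_le z _ _) (abs_nonneg _)

lemma span_rep {z : M} {a : StrongDual ℝ (Lip0 z)}
    (ha : a ∈ Submodule.span ℝ (Set.range (dirac z))) :
    ∃ (k : ℕ) (α : Fin k → ℝ) (y : Fin k → M), a = ∑ i, α i • dirac z (y i) := by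
  obtain ⟨n, f, g, hsum⟩ := Submodule.mem_span_set'.mp ha
  refine ⟨n, f, fun i => (g i).2.choose, ?_⟩
  rw [← hsum]
  refine Finset.sum_congr rfl fun i _ => ?_
  rw [(g i).2.choose_spec]

lemma nonempty_KRset {z : M} {a : StrongDual ℝ (Lip0 z)}
    (ha : a ∈ Submodule.span ℝ (Set.range (dirac z))) : (KRset z a).Nonempty := by
  obtain ⟨k, α, y, rfl⟩ := span_rep ha
  exact ⟨∑ i, |α i| * dist (y i) z, k, α, y, fun _ => z, by
    simp [dirac_base], rfl⟩

lemma zero_mem_KRset (z : M) : (0 : ℝ) ∈ KRset z 0 :=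
  ⟨0, ![], ![], ![], by simp, by simp⟩

lemma add_mem_KRset {z : M} {a b : StrongDual ℝ (Lip0 z)} {r s : ℝ}
    (hr : r ∈ KRset z a) (hs : s ∈ KRset z b) : r + s ∈ KRset z (a + b) := by
  obtain ⟨k, α, y, w, rfl, rfl⟩ := hr
  obtain ⟨l, β, u, v, rfl, rfl⟩ := hs
  refine ⟨k + l, Fin.append α β, Fin.append y u, Fin.append w v, ?_, ?_⟩ <;>
    rw [Fin.sum_univ_add] <;> simp [Fin.append_left, Fin.append_right]

lemma smul_mem_KRset {z : M} {a : StrongDual ℝ (Lip0 z)} {r : ℝ} (c : ℝ)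
    (hr : r ∈ KRset z a) : |c| * r ∈ KRset z (c • a) := by
  obtain ⟨k, α, y, w, rfl, rfl⟩ := hr
  refine ⟨k, fun i => c * α i, y, w, ?_, ?_⟩
  · rw [Finset.smul_sum]
    exact Finset.sum_congr rfl fun i _ => by rw [smul_smul]
  · rw [Finset.mul_sum]
    exact Finset.sum_congr rfl fun i _ => by rw [abs_mul, mul_assoc]

end KRproof

/-- on the span of the Dirac functionals, the free-space (dual) norm coincides
with the Kantorovich-Rubinstein norm. -/
theorem freeSpace_norm_eq_KR {M : Type*} [MetricSpace M] (z : M)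
    (a : StrongDual ℝ (Lip0 z)) (ha : a ∈ Submodule.span ℝ (Set.range (dirac z))) :
    ‖a‖ = sInf {r : ℝ | ∃ (k : ℕ) (α : Fin k → ℝ) (y w : Fin k → M),
      a = ∑ i, α i • (dirac z (y i) - dirac z (w i)) ∧
      r = ∑ i, |α i| * dist (y i) (w i)} := by
  show ‖a‖ = sInf (KRset z a)
  refine le_antisymm (le_csInf (nonempty_KRset ha) fun r hr => norm_le_of_mem_KRset hr) ?_
  -- hard direction
  set V := Submodule.span ℝ (Set.range (dirac z)) with hV
  set p : V → ℝ := fun b => sInf (KRset z ↑b) with hp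
  have hne : ∀ b : V, (KRset z (b : StrongDual ℝ (Lip0 z))).Nonempty :=
    fun b => nonempty_KRset b.2
  have p_nonneg : ∀ b : V, 0 ≤ p b :=
    fun b => le_csInf (hne b) fun r hr => KRset_nonneg hr
  have p_zero_le : p 0 ≤ 0 := csInf_le (bddBelow_KRset z _) (zero_mem_KRset z)
  have p_add : ∀ b c : V, p (b + c) ≤ p b + p c := by
    intro b c
    refine le_of_forall_pos_le_add fun ε hε => ?_
    obtain ⟨r, hr, hrlt⟩ := Real.lt_sInf_add_pos (hne b) (half_pos hε)
    obtain ⟨s, hs, hslt⟩ := Real.lt_sInf_add_pos (hne c) (half_pos hε)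
    have : p (b + c) ≤ r + s := csInf_le (bddBelow_KRset z _) (add_mem_KRset hr hs)
    linarith
  have p_smul_le : ∀ (c : ℝ) (b : V), p (c • b) ≤ |c| * p b := by
    intro c b
    rcases eq_or_lt_of_le (abs_nonneg c) with hc | hc
    · have hc0 : c = 0 := by rwa [eq_comm, abs_eq_zero] at hc
      subst hc0
      simpa using p_zero_le.trans (by simp)
    · refine le_of_forall_pos_le_add fun ε hε => ?_
      obtain ⟨r, hr, hrlt⟩ := Real.lt_sInf_add_pos (hne b) (div_pos hε hc)
      have h1 : p (c • b) ≤ |c| * r := csInf_le (bddBelow_KRset z _) (smul_mem_KRset c hr)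
      have h2 : |c| * r < |c| * (p b + ε / |c|) := by
        exact mul_lt_mul_of_pos_left hrlt hc
      rw [mul_add, mul_div_cancel₀ _ (ne_of_gt hc)] at h2
      linarith
  have p_hom : ∀ c : ℝ, 0 < c → ∀ b : V, p (c • b) = c * p b := by
    intro c hc b
    refine le_antisymm (by simpa [abs_of_pos hc] using p_smul_le c b) ?_
    have h := p_smul_le c⁻¹ (c • b)
    rw [inv_smul_smul₀ (ne_of_gt hc), abs_of_pos (inv_pos.2 hc)] at h
    calc c * p b ≤ c * (c⁻¹ * p (c • b)) :=
          mul_le_mul_of_nonneg_left h hc.le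
      _ = p (c • b) := by field_simp
  -- dispatch the case a = 0
  rcases eq_or_ne a 0 with rfl | ha0
  · simpa using csInf_le (bddBelow_KRset z _) (zero_mem_KRset z)
  -- Hahn–Banach
  set a' : V := ⟨a, ha⟩ with ha'
  have ha'0 : a' ≠ 0 := fun h => ha0 (congrArg Subtype.val h)
  set pm := LinearPMap.mkSpanSingleton (K := ℝ) (L := ℝ) (σ := RingHom.id ℝ) a' (p a') ha'0 with hpm
  have hf : ∀ x : pm.domain, pm x ≤ p x := by
    rintro ⟨x, hx⟩
    obtain ⟨t, rfl⟩ := Submodule.mem_span_singleton.mp hx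
    have hval : pm ⟨t • a', hx⟩ = t • p a' := LinearPMap.mkSpanSingleton'_apply _ _ _ t _
    rw [hval]
    rcases lt_trichotomy t 0 with ht | rfl | ht
    · have : t • p a' ≤ 0 := smul_nonpos_of_nonpos_of_nonneg ht.le (p_nonneg a')
      exact this.trans (p_nonneg _)
    · simpa using p_nonneg _
    · rw [p_hom t ht a']; rfl
  obtain ⟨g, hg_eq, hg_le⟩ := exists_extension_of_le_sublinear pm p p_hom p_add hf
  have hga' : g a' = p a' := by
    have := hg_eq ⟨a', Submodule.mem_span_singleton_self a'⟩
    rw [this, LinearPMap.mkSpanSingleton_apply]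
  -- the Lipschitz function induced by g
  set δ' : M → V := fun x => ⟨dirac z x, Submodule.subset_span ⟨x, rfl⟩⟩ with hδ'
  have hδdist : ∀ x y : M, p (δ' x - δ' y) ≤ dist x y := by
    intro x y
    refine csInf_le (bddBelow_KRset z _) ⟨1, ![1], ![x], ![y], ?_, by simp⟩
    simp [hδ']
  set f₀ : M → ℝ := fun x => g (δ' x) with hf₀
  have hlip : LipschitzWith 1 f₀ := by
    rw [lipschitzWith_iff_dist_le_mul]
    intro x y
    rw [Real.dist_eq]
    have h1 : f₀ x - f₀ y ≤ dist x y := by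
      have : f₀ x - f₀ y = g (δ' x - δ' y) := by rw [map_sub g]
      rw [this]
      exact (hg_le _).trans (hδdist x y)
    have h2 : -(f₀ x - f₀ y) ≤ dist x y := by
      have : -(f₀ x - f₀ y) = g (δ' y - δ' x) := by rw [map_sub g]; ring
      rw [this]
      exact (hg_le _).trans ((hδdist y x).trans_eq (dist_comm y x))
    push_cast
    rw [one_mul]
    exact abs_le.2 ⟨by linarith, h1⟩
  have hbase : f₀ z = 0 := by
    have : δ' z = 0 := Subtype.ext (by simp [hδ', dirac_base])
    rw [hf₀]; simp only [this, map_zero]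
  set F : Lip0 z := ⟨f₀, ⟨1, hlip⟩, hbase⟩ with hF
  have hFnorm : ‖F‖ ≤ 1 := by
    rw [Lip0.norm_def]
    have : Lip0.lipConst ⇑F ≤ 1 := Lip0.lipConst_le hlip
    exact_mod_cast this
  -- a F = p a'
  have haF : a F = p a' := by
    obtain ⟨k, α, y, hrep⟩ := span_rep ha
    have hsum : a' = ∑ i, α i • δ' (y i) := by
      apply Subtype.ext
      push_cast [hrep]
      exact hrep
    calc a F = ∑ i, α i * F (y i) := by rw [hrep]; simp
      _ = ∑ i, α i * g (δ' (y i)) := rfl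
      _ = g (∑ i, α i • δ' (y i)) := by rw [map_sum]; simp [smul_eq_mul]
      _ = g a' := by rw [← hsum]
      _ = p a' := hga'
  have : p a' ≤ ‖a‖ := by
    rw [← haF]
    calc a F ≤ |a F| := le_abs_self _
      _ = ‖a F‖ := (Real.norm_eq_abs _).symm
      _ ≤ ‖a‖ * ‖F‖ := a.le_opNorm F
      _ ≤ ‖a‖ * 1 := mul_le_mul_of_nonneg_left hFnorm (norm_nonneg a)
      _ = ‖a‖ := mul_one _
  exact this
end

section
/- Let (M,d) be an unbounded metric space and let (z_n) be a sequence in M with d(z_{n+1}, 0) > 2 d(z_n, 0) for all n. Set x_n = z_{2n−1}, y_n = z_{2n}. Then for all n, m: d(x_m, y_n) ≥ (1/3)·d(x_n, y_n), and for n ≠ m the open balls U(y_n, (1/3)d(y_n,x_n)) and U(y_m, (1/3)d(y_m,x_m)) are disjoint. -/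
/-- the unbounded case.  If `d(z_{n+1}, 0) > 2 d(z_n, 0)` and `x_n = z_{2n-1}`,
`y_n = z_{2n}`, then `d(x_m, y_n) ≥ (1/3) d(x_n, y_n)` and the balls
`U(y_n, (1/3) d(y_n, x_n))` are pairwise disjoint. -/
theorem unbounded_case_pairs {M : Type*} [MetricSpace M] (base : M) (z : ℕ → M)
    (hgrow : ∀ n, 1 ≤ n → 2 * dist (z n) base < dist (z (n + 1)) base) :
    (∀ n m, 1 ≤ n → 1 ≤ m →
      (1 / 3) * dist (z (2 * n - 1)) (z (2 * n)) ≤ dist (z (2 * m - 1)) (z (2 * n))) ∧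
    (∀ n m, 1 ≤ n → 1 ≤ m → n ≠ m →
      Disjoint (Metric.ball (z (2 * n)) ((1 / 3) * dist (z (2 * n)) (z (2 * n - 1))))
        (Metric.ball (z (2 * m)) ((1 / 3) * dist (z (2 * m)) (z (2 * m - 1))))) := by
  set r : ℕ → ℝ := fun n => dist (z n) base with hr
  have hmono : ∀ i j, 1 ≤ i → i ≤ j → r i ≤ r j := by
    intro i j hi hij
    induction j with
    | zero => omega
    | succ k ih =>
      rcases Nat.lt_or_ge i (k + 1) with h | h
      · have hk : 1 ≤ k := by omega
        have h1 := hgrow k hk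
        have h0 : (0:ℝ) ≤ r k := dist_nonneg
        have h2 := ih (by omega)
        simp only [hr] at *
        linarith
      · have : i = k + 1 := by omega
        simp [this]
  have hstep : ∀ n, 1 ≤ n → 2 * r (2 * n - 1) < r (2 * n) := by
    intro n hn
    have h1 : 2 * n - 1 + 1 = 2 * n := by omega
    have := hgrow (2 * n - 1) (by omega)
    rwa [h1] at this
  have hstep2 : ∀ n, 1 ≤ n → 2 * r (2 * n) < r (2 * n + 1) := by
    intro n hn
    exact hgrow (2 * n) (by omega)
  constructor
  · intro n m hn hm
    have ha : (0:ℝ) ≤ r (2 * n - 1) := dist_nonneg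
    have hab := hstep n hn
    -- D ≤ a + b
    have hD : dist (z (2 * n - 1)) (z (2 * n)) ≤ r (2 * n - 1) + r (2 * n) := by
      calc dist (z (2 * n - 1)) (z (2 * n))
          ≤ dist (z (2 * n - 1)) base + dist base (z (2 * n)) := dist_triangle _ _ _
        _ = r (2 * n - 1) + r (2 * n) := by rw [dist_comm base]
    rcases le_or_gt m n with h | h
    · -- m ≤ n : dist ≥ b - r(2m-1) ≥ b - a
      have hmn : r (2 * m - 1) ≤ r (2 * n - 1) := hmono _ _ (by omega) (by omega)
      have hlow : r (2 * n) - r (2 * m - 1) ≤ dist (z (2 * m - 1)) (z (2 * n)) := by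
        have := dist_triangle (z (2 * n)) (z (2 * m - 1)) base
        have e : dist (z (2 * n)) (z (2 * m - 1)) = dist (z (2 * m - 1)) (z (2 * n)) :=
          dist_comm _ _
        simp only [hr] at *
        linarith
      linarith
    · -- n < m : 2n+1 ≤ 2m-1
      have hmn : r (2 * n + 1) ≤ r (2 * m - 1) := hmono _ _ (by omega) (by omega)
      have h2 := hstep2 n hn
      have hlow : r (2 * m - 1) - r (2 * n) ≤ dist (z (2 * m - 1)) (z (2 * n)) := by
        have := dist_triangle (z (2 * m - 1)) (z (2 * n)) base
        simp only [hr] at *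
        linarith
      linarith
  · have key : ∀ n m, 1 ≤ n → n < m →
        Disjoint (Metric.ball (z (2 * n)) ((1 / 3) * dist (z (2 * n)) (z (2 * n - 1))))
          (Metric.ball (z (2 * m)) ((1 / 3) * dist (z (2 * m)) (z (2 * m - 1)))) := by
      intro n m hn hnm
      rw [Set.disjoint_left]
      intro x hx hx'
      rw [Metric.mem_ball] at hx hx'
      have ha : (0:ℝ) ≤ r (2 * n - 1) := dist_nonneg
      have hab := hstep n hn
      have ha' : (0:ℝ) ≤ r (2 * m - 1) := dist_nonneg
      have hab' := hstep m (by omega)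
      -- radius bounds
      have hDn : dist (z (2 * n)) (z (2 * n - 1)) ≤ r (2 * n) + r (2 * n - 1) := by
        calc dist (z (2 * n)) (z (2 * n - 1))
            ≤ dist (z (2 * n)) base + dist base (z (2 * n - 1)) := dist_triangle _ _ _
          _ = r (2 * n) + r (2 * n - 1) := by rw [dist_comm base]
      have hDm : dist (z (2 * m)) (z (2 * m - 1)) ≤ r (2 * m) + r (2 * m - 1) := by
        calc dist (z (2 * m)) (z (2 * m - 1))
            ≤ dist (z (2 * m)) base + dist base (z (2 * m - 1)) := dist_triangle _ _ _
          _ = r (2 * m) + r (2 * m - 1) := by rw [dist_comm base]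
      -- dist x base < 3/2 * r(2n)
      have hup : dist x base ≤ dist x (z (2 * n)) + r (2 * n) := dist_triangle _ _ _
      -- dist x base > r(2m) - radius_m
      have hlow : r (2 * m) - dist x (z (2 * m)) ≤ dist x base := by
        have := dist_triangle (z (2 * m)) x base
        have e : dist (z (2 * m)) x = dist x (z (2 * m)) := dist_comm _ _
        simp only [hr] at *
        linarith
      -- r(2m) ≥ r(2n+2) > 2 r(2n+1) > 4 r(2n)
      have hmn : r (2 * n + 2) ≤ r (2 * m) := hmono _ _ (by omega) (by omega)
      have h1 := hstep2 n hn
      have h2 : 2 * r (2 * n + 1) < r (2 * n + 2) := hgrow (2 * n + 1) (by omega)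
      have h0 : (0:ℝ) ≤ r (2 * n) := dist_nonneg
      linarith
    intro n m hn hm hne
    rcases Nat.lt_or_ge n m with h | h
    · exact key n m hn h
    · exact (key m n hm (by omega)).symm
end

section
/- Let X be a Banach space such that ℓ1 is isomorphic to a complemented subspace of X. Then X is not isomorphic to a complemented subspace of any C(K) space. -/
open Finset
open scoped ENNReal

/-- signed sum over `s` with signs given by membership in `σ`. -/
def sgnsum (s σ : Finset ℕ) (a : ℕ → ℝ) : ℝ :=
  ∑ n ∈ s, (if n ∈ σ then a n else -a n)

lemma sgnsum_insert_not_mem {s : Finset ℕ} {i : ℕ} (hi : i ∉ s) {σ : Finset ℕ}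
    (hσ : σ ∈ s.powerset) (a : ℕ → ℝ) :
    sgnsum (insert i s) σ a = -a i + sgnsum s σ a := by
  have hiσ : i ∉ σ := fun h => hi (mem_powerset.1 hσ h)
  rw [sgnsum, sum_insert hi, if_neg hiσ]; rfl

lemma sgnsum_insert_insert {s : Finset ℕ} {i : ℕ} (hi : i ∉ s) (σ : Finset ℕ) (a : ℕ → ℝ) :
    sgnsum (insert i s) (insert i σ) a = a i + sgnsum s σ a := by
  rw [sgnsum, sum_insert hi, if_pos (mem_insert_self i σ)]
  congr 1
  refine sum_congr rfl fun n hn => ?_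
  have : n ≠ i := fun h => hi (h ▸ hn)
  simp [mem_insert, this]

lemma sum_sq_sgnsum (s : Finset ℕ) (a : ℕ → ℝ) :
    ∑ σ ∈ s.powerset, (sgnsum s σ a) ^ 2 = 2 ^ s.card * ∑ n ∈ s, a n ^ 2 := by
  induction s using Finset.induction_on with
  | empty => simp [sgnsum]
  | @insert i s hi ih =>
    rw [sum_powerset_insert hi]
    have h1 : ∑ σ ∈ s.powerset, (sgnsum (insert i s) σ a) ^ 2
        = ∑ σ ∈ s.powerset, (-a i + sgnsum s σ a) ^ 2 :=
      sum_congr rfl fun σ hσ => by rw [sgnsum_insert_not_mem hi hσ a]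
    have h2 : ∑ σ ∈ s.powerset, (sgnsum (insert i s) (insert i σ) a) ^ 2
        = ∑ σ ∈ s.powerset, (a i + sgnsum s σ a) ^ 2 :=
      sum_congr rfl fun σ _ => by rw [sgnsum_insert_insert hi σ a]
    have key : ∀ σ ∈ s.powerset,
        (-a i + sgnsum s σ a) ^ 2 + (a i + sgnsum s σ a) ^ 2
          = 2 * (sgnsum s σ a) ^ 2 + 2 * a i ^ 2 := fun σ _ => by ring
    rw [h1, h2, ← sum_add_distrib, sum_congr rfl key, sum_add_distrib, ← mul_sum, ih,
      sum_const, card_powerset, card_insert_of_notMem hi, sum_insert hi]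
    push_cast
    ring

lemma sum_quart_sgnsum (s : Finset ℕ) (a : ℕ → ℝ) :
    ∑ σ ∈ s.powerset, (sgnsum s σ a) ^ 4 ≤ 3 * 2 ^ s.card * (∑ n ∈ s, a n ^ 2) ^ 2 := by
  induction s using Finset.induction_on with
  | empty => simp [sgnsum]
  | @insert i s hi ih =>
    rw [sum_powerset_insert hi]
    have h1 : ∑ σ ∈ s.powerset, (sgnsum (insert i s) σ a) ^ 4
        = ∑ σ ∈ s.powerset, (-a i + sgnsum s σ a) ^ 4 :=
      sum_congr rfl fun σ hσ => by rw [sgnsum_insert_not_mem hi hσ a]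
    have h2 : ∑ σ ∈ s.powerset, (sgnsum (insert i s) (insert i σ) a) ^ 4
        = ∑ σ ∈ s.powerset, (a i + sgnsum s σ a) ^ 4 :=
      sum_congr rfl fun σ _ => by rw [sgnsum_insert_insert hi σ a]
    have key : ∀ σ ∈ s.powerset,
        (-a i + sgnsum s σ a) ^ 4 + (a i + sgnsum s σ a) ^ 4
          = 2 * (sgnsum s σ a) ^ 4 + 12 * a i ^ 2 * (sgnsum s σ a) ^ 2 + 2 * a i ^ 4 :=
      fun σ _ => by ring
    rw [h1, h2, ← sum_add_distrib, sum_congr rfl key]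
    rw [sum_add_distrib, sum_add_distrib, ← mul_sum, ← mul_sum, sum_sq_sgnsum, sum_const,
      card_powerset]
    have hQ : (0:ℝ) ≤ ∑ n ∈ s, a n ^ 2 := sum_nonneg fun n _ => sq_nonneg _
    rw [card_insert_of_notMem hi, sum_insert hi]
    set Q := ∑ n ∈ s, a n ^ 2 with hQdef
    have h3 : ∑ σ ∈ s.powerset, (sgnsum s σ a) ^ 4 ≤ 3 * 2 ^ s.card * Q ^ 2 := ih
    have hP : (0:ℝ) < 2 ^ s.card := pow_pos (by norm_num) _
    have hpow : (3:ℝ) * 2 ^ (s.card + 1) * (a i ^ 2 + Q) ^ 2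
        = 6 * 2 ^ s.card * (a i ^ 2 + Q) ^ 2 := by rw [pow_succ]; ring
    rw [nsmul_eq_mul, hpow]
    push_cast
    nlinarith [h3, hP.le, mul_nonneg hP.le (sq_nonneg (a i ^ 2)),
      mul_nonneg (mul_nonneg hP.le (sq_nonneg (a i))) hQ]

lemma abs_sgnsum_cube_sq_le (s : Finset ℕ) (a : ℕ → ℝ) :
    (∑ σ ∈ s.powerset, (sgnsum s σ a) ^ 2) ^ 2
      ≤ (∑ σ ∈ s.powerset, |sgnsum s σ a|) * ∑ σ ∈ s.powerset, |sgnsum s σ a| ^ 3 := by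
  have h := Finset.sum_mul_sq_le_sq_mul_sq s.powerset
    (fun σ => Real.sqrt |sgnsum s σ a|) (fun σ => |sgnsum s σ a| * Real.sqrt |sgnsum s σ a|)
  have e1 : ∀ σ ∈ s.powerset,
      Real.sqrt |sgnsum s σ a| * (|sgnsum s σ a| * Real.sqrt |sgnsum s σ a|)
        = (sgnsum s σ a) ^ 2 := fun σ _ => by
    calc Real.sqrt |sgnsum s σ a| * (|sgnsum s σ a| * Real.sqrt |sgnsum s σ a|)
        = (Real.sqrt |sgnsum s σ a| * Real.sqrt |sgnsum s σ a|) * |sgnsum s σ a| := by ring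
      _ = |sgnsum s σ a| * |sgnsum s σ a| := by rw [Real.mul_self_sqrt (abs_nonneg _)]
      _ = sgnsum s σ a * sgnsum s σ a := abs_mul_abs_self _
      _ = (sgnsum s σ a) ^ 2 := by ring
  have e2 : ∀ σ ∈ s.powerset,
      (Real.sqrt |sgnsum s σ a|) ^ 2 = |sgnsum s σ a| := fun σ _ =>
    Real.sq_sqrt (abs_nonneg _)
  have e3 : ∀ σ ∈ s.powerset,
      (|sgnsum s σ a| * Real.sqrt |sgnsum s σ a|) ^ 2 = |sgnsum s σ a| ^ 3 := fun σ _ => by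
    rw [mul_pow, Real.sq_sqrt (abs_nonneg _)]; ring
  rwa [Finset.sum_congr rfl e1, Finset.sum_congr rfl e2, Finset.sum_congr rfl e3] at h

lemma cube_sq_le (s : Finset ℕ) (a : ℕ → ℝ) :
    (∑ σ ∈ s.powerset, |sgnsum s σ a| ^ 3) ^ 2
      ≤ (∑ σ ∈ s.powerset, (sgnsum s σ a) ^ 2) * ∑ σ ∈ s.powerset, (sgnsum s σ a) ^ 4 := by
  have h := Finset.sum_mul_sq_le_sq_mul_sq s.powerset
    (fun σ => |sgnsum s σ a|) (fun σ => (sgnsum s σ a) ^ 2)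
  have e1 : ∀ σ ∈ s.powerset, |sgnsum s σ a| * (sgnsum s σ a) ^ 2
      = |sgnsum s σ a| ^ 3 := fun σ _ => by
    rw [← sq_abs]; ring
  have e2 : ∀ σ ∈ s.powerset, |sgnsum s σ a| ^ 2 = (sgnsum s σ a) ^ 2 := fun σ _ =>
    sq_abs _
  have e3 : ∀ σ ∈ s.powerset, ((sgnsum s σ a) ^ 2) ^ 2 = (sgnsum s σ a) ^ 4 := fun σ _ => by
    ring
  rwa [Finset.sum_congr rfl e1, Finset.sum_congr rfl e2, Finset.sum_congr rfl e3] at h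

/-- Finite Khintchine-type lower bound: the average of `|∑ ±aₙ|` over all sign choices is at
least `(∑ |aₙ|) / (√3 √N)`. -/
lemma khintchine (s : Finset ℕ) (a : ℕ → ℝ) :
    (2 ^ s.card : ℝ) * ∑ n ∈ s, |a n|
      ≤ Real.sqrt 3 * Real.sqrt s.card * ∑ σ ∈ s.powerset, |sgnsum s σ a| := by
  classical
  set N := s.card with hN
  set Q := ∑ n ∈ s, a n ^ 2 with hQdef
  set A := ∑ σ ∈ s.powerset, |sgnsum s σ a| with hAdef
  have hQ0 : 0 ≤ Q := Finset.sum_nonneg fun n _ => sq_nonneg _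
  have hA0 : 0 ≤ A := Finset.sum_nonneg fun σ _ => abs_nonneg _
  have hPN : (0:ℝ) < 2 ^ N := pow_pos (by norm_num) _
  rcases eq_or_lt_of_le hQ0 with hQ | hQpos
  · -- Q = 0 : all aₙ = 0 on s
    have : ∀ n ∈ s, a n ^ 2 = 0 := by
      intro n hn
      have := (Finset.sum_eq_zero_iff_of_nonneg (fun m _ => sq_nonneg (a m))).1 hQ.symm
      exact this n hn
    have hz : ∑ n ∈ s, |a n| = 0 := Finset.sum_eq_zero fun n hn => by
      have := this n hn; rw [abs_eq_zero]; exact pow_eq_zero_iff (n := 2) (by norm_num) |>.1 this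
    rw [hz, mul_zero]
    positivity
  · -- main case
    have hB : ∑ σ ∈ s.powerset, (sgnsum s σ a) ^ 2 = 2 ^ N * Q := sum_sq_sgnsum s a
    have hC : ∑ σ ∈ s.powerset, (sgnsum s σ a) ^ 4 ≤ 3 * 2 ^ N * Q ^ 2 := sum_quart_sgnsum s a
    set D := ∑ σ ∈ s.powerset, |sgnsum s σ a| ^ 3 with hDdef
    have hD0 : 0 ≤ D := Finset.sum_nonneg fun σ _ => pow_nonneg (abs_nonneg _) _
    have hC0 : 0 ≤ ∑ σ ∈ s.powerset, (sgnsum s σ a) ^ 4 :=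
      Finset.sum_nonneg fun σ _ => by positivity
    have e1 : (2 ^ N * Q) ^ 2 ≤ A * D := by rw [← hB]; exact abs_sgnsum_cube_sq_le s a
    have e2 : D ^ 2 ≤ (2 ^ N * Q) * ∑ σ ∈ s.powerset, (sgnsum s σ a) ^ 4 := by
      rw [← hB]; exact cube_sq_le s a
    have hBpos : (0:ℝ) < 2 ^ N * Q := mul_pos hPN hQpos
    -- B⁴ ≤ A² D² ≤ A² B C ≤ A² B (3·2^N·Q²)
    have e4 : ((2 ^ N * Q) ^ 2) ^ 2 ≤ (A * D) ^ 2 := by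
      have := pow_le_pow_left₀ (sq_nonneg ((2:ℝ) ^ N * Q)) e1 2
      simpa using this
    have e5 : (A * D) ^ 2 ≤ A ^ 2 * ((2 ^ N * Q) * (3 * 2 ^ N * Q ^ 2)) := by
      have h1 : (A * D) ^ 2 = A ^ 2 * D ^ 2 := by ring
      have h2 : D ^ 2 ≤ (2 ^ N * Q) * (3 * 2 ^ N * Q ^ 2) :=
        e2.trans (mul_le_mul_of_nonneg_left hC hBpos.le)
      rw [h1]
      exact mul_le_mul_of_nonneg_left h2 (sq_nonneg A)
    have e6 : ((2 ^ N * Q) ^ 2) ^ 2 ≤ A ^ 2 * ((2 ^ N * Q) * (3 * 2 ^ N * Q ^ 2)) :=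
      e4.trans e5
    -- conclude 2^(2N) Q ≤ 3 A²
    have key : (2 ^ N : ℝ) * 2 ^ N * Q ≤ 3 * A ^ 2 := by
      nlinarith [e6, hBpos, hQpos, hPN, sq_nonneg A,
        mul_pos (mul_pos hPN hPN) (mul_pos hQpos (mul_pos hQpos hQpos))]
    -- ℓ¹–ℓ² comparison: (∑|aₙ|)² ≤ N Q
    have hl12 : (∑ n ∈ s, |a n|) ^ 2 ≤ N * Q := by
      have h := Finset.sum_mul_sq_le_sq_mul_sq s (fun _ => (1:ℝ)) (fun n => |a n|)
      simpa [Finset.sum_const, sq_abs, hN, hQdef, nsmul_eq_mul] using h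
    -- final squaring
    have hLHS0 : 0 ≤ (2 ^ N : ℝ) * ∑ n ∈ s, |a n| :=
      mul_nonneg hPN.le (Finset.sum_nonneg fun n _ => abs_nonneg _)
    have hRHS0 : 0 ≤ Real.sqrt 3 * Real.sqrt N * A :=
      mul_nonneg (mul_nonneg (Real.sqrt_nonneg _) (Real.sqrt_nonneg _)) hA0
    have hsq : ((2 ^ N : ℝ) * ∑ n ∈ s, |a n|) ^ 2 ≤ (Real.sqrt 3 * Real.sqrt N * A) ^ 2 := by
      have hr : (Real.sqrt 3 * Real.sqrt N * A) ^ 2 = 3 * N * A ^ 2 := by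
        rw [mul_pow, mul_pow, Real.sq_sqrt (by norm_num : (3:ℝ) ≥ 0),
          Real.sq_sqrt (Nat.cast_nonneg N)]
      rw [hr, mul_pow]
      calc ((2:ℝ) ^ N) ^ 2 * (∑ n ∈ s, |a n|) ^ 2
          ≤ (2 ^ N) ^ 2 * (N * Q) := by
            exact mul_le_mul_of_nonneg_left hl12 (by positivity)
        _ = (N : ℝ) * (2 ^ N * 2 ^ N * Q) := by ring
        _ ≤ (N : ℝ) * (3 * A ^ 2) := mul_le_mul_of_nonneg_left key (Nat.cast_nonneg N)
        _ = 3 * N * A ^ 2 := by ring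
    calc (2 ^ N : ℝ) * ∑ n ∈ s, |a n|
        = Real.sqrt (((2 ^ N : ℝ) * ∑ n ∈ s, |a n|) ^ 2) := (Real.sqrt_sq hLHS0).symm
      _ ≤ Real.sqrt ((Real.sqrt 3 * Real.sqrt N * A) ^ 2) := Real.sqrt_le_sqrt hsq
      _ = Real.sqrt 3 * Real.sqrt N * A := Real.sqrt_sq hRHS0


section Main

variable {X : Type*} [NormedAddCommGroup X] [NormedSpace ℝ X] [CompleteSpace X]
variable (K : Type*) [TopologicalSpace K] [CompactSpace K] [T2Space K]

set_option maxHeartbeats 1000000 in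
private lemma aux_no_ell1_complemented (Y : Submodule ℝ X) (P : X →L[ℝ] X) (hPY : ∀ v, P v ∈ Y) (hPid : ∀ v ∈ Y, P v = v)
    (i : ↥Y ≃L[ℝ] lp (fun _ : ℕ => ℝ) 1)
    (Z : Submodule ℝ C(K, ℝ)) (Q : C(K, ℝ) →L[ℝ] C(K, ℝ)) (hQZ : ∀ v, Q v ∈ Z)
    (hQid : ∀ v ∈ Z, Q v = v) (e : ↥Z ≃L[ℝ] X) : False := by
  classical
  set L1 := lp (fun _ : ℕ => ℝ) 1 with hL1
  -- build T : C(K,ℝ) →L L1 and R : L1 →L C(K,ℝ) with T ∘ R = id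
  set A : C(K, ℝ) →L[ℝ] X := (e : ↥Z →L[ℝ] X).comp (Q.codRestrict Z hQZ) with hA
  set B : X →L[ℝ] C(K, ℝ) := Z.subtypeL.comp (e.symm : X →L[ℝ] ↥Z) with hB
  have hAB : ∀ x : X, A (B x) = x := by
    intro x
    have hz : (Q.codRestrict Z hQZ) (Z.subtypeL (e.symm x)) = e.symm x := by
      apply Subtype.ext
      simpa using hQid _ (e.symm x).2
    calc A (B x) = e ((Q.codRestrict Z hQZ) (Z.subtypeL (e.symm x))) := rfl
      _ = e (e.symm x) := by rw [hz]
      _ = x := e.apply_symm_apply x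
  set S : X →L[ℝ] L1 := (i : ↥Y →L[ℝ] L1).comp (P.codRestrict Y hPY) with hS
  set U : L1 →L[ℝ] X := Y.subtypeL.comp (i.symm : L1 →L[ℝ] ↥Y) with hU
  have hSU : ∀ y : L1, S (U y) = y := by
    intro y
    have hz : (P.codRestrict Y hPY) (Y.subtypeL (i.symm y)) = i.symm y := by
      apply Subtype.ext
      simpa using hPid _ (i.symm y).2
    calc S (U y) = i ((P.codRestrict Y hPY) (Y.subtypeL (i.symm y))) := rfl
      _ = i (i.symm y) := by rw [hz]
      _ = y := i.apply_symm_apply y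
  set T : C(K, ℝ) →L[ℝ] L1 := S.comp A with hT
  set R : L1 →L[ℝ] C(K, ℝ) := B.comp U with hR
  have hTR : ∀ y : L1, T (R y) = y := fun y => by
    calc T (R y) = S (A (B (U y))) := rfl
      _ = S (U y) := by rw [hAB]
      _ = y := hSU y
  -- coordinate functionals
  set μ : ℕ → C(K, ℝ) →ₗ[ℝ] ℝ := fun n =>
    { toFun := fun f => (T f : ∀ _ : ℕ, ℝ) n
      map_add' := fun f g => by simp [lp.coeFn_add]
      map_smul' := fun c f => by
        show (T (c • f) : ∀ _ : ℕ, ℝ) n = _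
        rw [map_smul, lp.coeFn_smul]; simp } with hμ
  have hμdef : ∀ n f, μ n f = (T f : ∀ _ : ℕ, ℝ) n := fun _ _ => rfl
  -- partial absolute sums of coordinates are dominated by the norm
  have hsum : ∀ (f : C(K, ℝ)) (F : Finset ℕ), ∑ n ∈ F, |μ n f| ≤ ‖T‖ * ‖f‖ := by
    intro f F
    have hp : 0 < (1 : ℝ≥0∞).toReal := by norm_num
    have h1 := lp.sum_rpow_le_norm_rpow hp (T f) F
    have h2 : ∑ n ∈ F, |μ n f| ≤ ‖T f‖ := by
      have e1 : ∀ n ∈ F, ‖(T f : ∀ _ : ℕ, ℝ) n‖ ^ (1 : ℝ≥0∞).toReal = |μ n f| := by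
        intro n _; simp [hμdef, Real.norm_eq_abs]
      rw [Finset.sum_congr rfl e1] at h1
      simpa using h1
    exact h2.trans (T.le_opNorm f)
  -- the unit vectors and their preimages
  set xv : ℕ → C(K, ℝ) := fun n => R (lp.single 1 n (1 : ℝ)) with hxv
  have hsingle_norm : ∀ n : ℕ, ‖lp.single (E := fun _ : ℕ => ℝ) 1 n (1 : ℝ)‖ = 1 := by
    intro n
    have := lp.norm_single (E := fun _ : ℕ => ℝ) (p := 1) (by norm_num) n (1 : ℝ)
    simpa using this
  have hxnorm : ∀ n, ‖xv n‖ ≤ ‖R‖ := by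
    intro n
    calc ‖xv n‖ ≤ ‖R‖ * ‖lp.single (E := fun _ : ℕ => ℝ) 1 n (1 : ℝ)‖ := R.le_opNorm _
      _ = ‖R‖ := by rw [hsingle_norm, mul_one]
  have hcoord : ∀ n m : ℕ, μ n (xv m) = if n = m then 1 else 0 := by
    intro n m
    rw [hμdef, hxv]
    show (T (R (lp.single 1 m (1:ℝ))) : ∀ _ : ℕ, ℝ) n = _
    rw [hTR]
    by_cases h : n = m
    · subst h; simp [lp.single_apply_self]
    · simp [lp.single_apply_ne _ _ _ h, h]
  -- positivity of norms
  have hTRnorm : (1 : ℝ) ≤ ‖T‖ * ‖R‖ := by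
    have h0 := hcoord 0 0
    have h1 : |μ 0 (xv 0)| = 1 := by rw [h0]; norm_num
    have h2 : |μ 0 (xv 0)| ≤ ‖T‖ * ‖xv 0‖ := by
      have := hsum (xv 0) {0}
      simpa using this
    have h3 : ‖T‖ * ‖xv 0‖ ≤ ‖T‖ * ‖R‖ :=
      mul_le_mul_of_nonneg_left (hxnorm 0) T.opNorm_nonneg
    rw [h1] at h2; linarith
  have hT0 : 0 < ‖T‖ := by
    by_contra h
    push_neg at h
    have : ‖T‖ = 0 := le_antisymm h T.opNorm_nonneg
    rw [this, zero_mul] at hTRnorm; linarith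
  have hR0 : 0 < ‖R‖ := by
    by_contra h
    push_neg at h
    have : ‖R‖ = 0 := le_antisymm h R.opNorm_nonneg
    rw [this, mul_zero] at hTRnorm; linarith

  -- parameters
  set τ := ‖T‖ with hτdef
  set ρ := ‖R‖ with hρdef
  set δ : ℝ := ρ⁻¹ with hδdef
  have hδ0 : 0 < δ := inv_pos.2 hR0
  set η : ℝ := δ / (2 * τ) with hηdef
  have hη0 : 0 < η := div_pos hδ0 (by positivity)
  set N : ℕ := ⌈12 * τ ^ 2 * ρ ^ 2⌉₊ + 1 with hNdef
  set s : Finset ℕ := Finset.range N with hsdef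
  have hscard : s.card = N := Finset.card_range N
  -- normalized vectors
  set g : ℕ → C(K, ℝ) := fun n => ρ⁻¹ • xv n with hgdef
  have hgn : ∀ n, g n = ρ⁻¹ • xv n := fun n => rfl
  have hgnorm : ∀ n, ‖g n‖ ≤ 1 := by
    intro n
    have h1 : ‖g n‖ = |ρ|⁻¹ * ‖xv n‖ := by
      rw [hgn]
      have := norm_smul (α := ℝ) (β := C(K, ℝ)) ρ⁻¹ (xv n)
      simpa using this
    rw [h1, abs_of_pos hR0]
    calc ρ⁻¹ * ‖xv n‖ ≤ ρ⁻¹ * ρ := by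
          exact mul_le_mul_of_nonneg_left (hxnorm n) (inv_pos.2 hR0).le
      _ = 1 := inv_mul_cancel₀ hR0.ne'
  have hgself : ∀ n, μ n (g n) = δ := by
    intro n
    rw [hgn]
    have : μ n (ρ⁻¹ • xv n) = ρ⁻¹ * μ n (xv n) := by
      rw [map_smul]; simp
    rw [this, hcoord n n]; simp [hδdef]
  have hgpt : ∀ n (u : K), |g n u| ≤ 1 := by
    intro n u
    have := (g n).norm_coe_le_norm u
    rw [Real.norm_eq_abs] at this
    exact this.trans (hgnorm n)
  -- open cover by oscillation sets
  set V : K → Set K := fun t => {u | ∀ n ∈ s, |g n u - g n t| < η} with hVdef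
  have hVopen : ∀ t, IsOpen (V t) := by
    intro t
    have hrw : V t = ⋂ n ∈ s, {u | |g n u - g n t| < η} := by
      ext u; simp [hVdef, Set.mem_iInter]
    rw [hrw]
    refine isOpen_biInter_finset fun n _ => ?_
    have hc : Continuous fun u => |g n u - g n t| :=
      ((g n).continuous.sub continuous_const).abs
    exact isOpen_lt hc continuous_const
  have hVmem : ∀ t, t ∈ V t := by
    intro t n _
    simpa using hη0
  obtain ⟨I, hI⟩ := isCompact_univ.elim_finite_subcover V hVopen
    (fun t _ => Set.mem_iUnion.2 ⟨t, hVmem t⟩)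
  -- partition of unity subordinate to the cover
  obtain ⟨p, hpsub⟩ := PartitionOfUnity.exists_isSubordinate (s := (Set.univ : Set K))
    isClosed_univ (fun j : ↥I => V j.1) (fun j => hVopen j.1)
    (by
      intro u _
      rcases Set.mem_iUnion₂.1 (hI (Set.mem_univ u)) with ⟨t, ht, hut⟩
      exact Set.mem_iUnion.2 ⟨⟨t, ht⟩, hut⟩)
  have hpsum : ∀ u, ∑ j : ↥I, p j u = 1 := by
    intro u
    have h1 := p.sum_eq_one (Set.mem_univ u)
    rwa [finsum_eq_sum_of_fintype] at h1
  have hpnn : ∀ (j : ↥I) (u : K), 0 ≤ p j u := fun j u => p.nonneg j u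
  have hpV : ∀ (j : ↥I) (u : K), p j u ≠ 0 → u ∈ V j.1 := by
    intro j u h
    exact hpsub j (subset_tsupport _ (by simpa [Function.mem_support] using h))
  -- approximation of g n by combinations of the partition
  have happrox : ∀ n ∈ s, ‖g n - ∑ j : ↥I, g n j.1 • (p j : C(K, ℝ))‖ ≤ η := by
    intro n hn
    refine (ContinuousMap.norm_le _ hη0.le).2 fun u => ?_
    have hval : (g n - ∑ j : ↥I, g n j.1 • (p j : C(K, ℝ))) u
        = g n u - ∑ j : ↥I, g n j.1 * p j u := by
      simp [ContinuousMap.sum_apply]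
    have hrw : g n u - ∑ j : ↥I, g n j.1 * p j u
        = ∑ j : ↥I, (g n u - g n j.1) * p j u := by
      rw [Finset.sum_congr rfl (fun j _ => sub_mul (g n u) (g n j.1) (p j u)),
        Finset.sum_sub_distrib, ← Finset.mul_sum, hpsum u, mul_one]
    rw [Real.norm_eq_abs, hval, hrw]
    calc |∑ j : ↥I, (g n u - g n j.1) * p j u|
        ≤ ∑ j : ↥I, |(g n u - g n j.1) * p j u| := Finset.abs_sum_le_sum_abs _ _
      _ ≤ ∑ j : ↥I, η * p j u := by
          refine Finset.sum_le_sum fun j _ => ?_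
          rw [abs_mul, abs_of_nonneg (hpnn j u)]
          rcases eq_or_ne (p j u) 0 with h | h
          · simp [h]
          · exact mul_le_mul_of_nonneg_right (le_of_lt (hpV j u h n hn)) (hpnn j u)
      _ = η := by rw [← Finset.mul_sum, hpsum u, mul_one]
  -- lower bound: each row has ℓ¹ mass at least δ/2
  have hτη : τ * η = δ / 2 := by
    rw [hηdef]; field_simp
  clear_value A B S U T R μ xv g V τ ρ δ η N s
  have hd1 : ∀ n ∈ s, δ / 2 ≤ ∑ j : ↥I, |μ n (p j)| := by
    intro n hn
    set w : C(K, ℝ) := ∑ j : ↥I, g n j.1 • (p j : C(K, ℝ)) with hwdef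
    have hμw : μ n w = ∑ j : ↥I, g n j.1 * μ n (p j) := by
      rw [hwdef, map_sum]
      exact Finset.sum_congr rfl fun j _ => by rw [map_smul]; simp
    have herr : |μ n (g n - w)| ≤ τ * η := by
      have h1 := hsum (g n - w) {n}
      simp only [Finset.sum_singleton] at h1
      exact h1.trans (mul_le_mul_of_nonneg_left (happrox n hn) hT0.le)
    have hsplit : μ n (g n) = μ n (g n - w) + μ n w := by
      rw [← map_add]; congr 1; abel
    have hbound : μ n w ≤ ∑ j : ↥I, |μ n (p j)| := by
      rw [hμw]
      calc ∑ j : ↥I, g n j.1 * μ n (p j)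
          ≤ ∑ j : ↥I, |g n j.1 * μ n (p j)| := Finset.sum_le_sum fun j _ => le_abs_self _
        _ = ∑ j : ↥I, |g n j.1| * |μ n (p j)| := by simp [abs_mul]
        _ ≤ ∑ j : ↥I, 1 * |μ n (p j)| := Finset.sum_le_sum fun j _ =>
            mul_le_mul_of_nonneg_right (hgpt n j.1) (abs_nonneg _)
        _ = ∑ j : ↥I, |μ n (p j)| := by simp
    have hδeq : δ = μ n (g n) := (hgself n).symm
    have h2 : μ n (g n - w) ≤ τ * η := (le_abs_self _).trans herr
    linarith
  -- upper bound: signed sums are uniformly bounded by τ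
  set ε : Finset ℕ → ℕ → ℝ := fun σ n => if n ∈ σ then 1 else -1 with hεdef
  have hεabs : ∀ σ n, |ε σ n| = 1 := by
    intro σ n; simp only [hεdef]; split_ifs <;> norm_num
  have hεrw : ∀ (σ : Finset ℕ) (n : ℕ) (x : ℝ),
      (if n ∈ σ then x else -x) = ε σ n * x := by
    intro σ n x; simp only [hεdef]; split_ifs <;> ring
  have hd2 : ∀ σ ∈ s.powerset,
      ∑ j : ↥I, |∑ n ∈ s, ε σ n * μ n (p j)| ≤ τ := by
    intro σ _
    set c : ↥I → ℝ := fun j => if 0 ≤ ∑ n ∈ s, ε σ n * μ n (p j) then 1 else -1 with hcdef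
    have hcabs : ∀ j : ↥I, |c j| = 1 := by
      intro j; simp only [hcdef]; split_ifs <;> norm_num
    have habs : ∀ j : ↥I, |∑ n ∈ s, ε σ n * μ n (p j)| = c j * ∑ n ∈ s, ε σ n * μ n (p j) := by
      intro j; simp only [hcdef]; split_ifs with h
      · rw [abs_of_nonneg h, one_mul]
      · push_neg at h; rw [abs_of_neg h]; ring
    set F : C(K, ℝ) := ∑ j : ↥I, c j • (p j : C(K, ℝ)) with hFdef
    have hFnorm : ‖F‖ ≤ 1 := by
      refine (ContinuousMap.norm_le _ zero_le_one).2 fun u => ?_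
      have hval : F u = ∑ j : ↥I, c j * p j u := by simp [hFdef, ContinuousMap.sum_apply]
      rw [Real.norm_eq_abs, hval]
      calc |∑ j : ↥I, c j * p j u| ≤ ∑ j : ↥I, |c j * p j u| := Finset.abs_sum_le_sum_abs _ _
        _ = ∑ j : ↥I, p j u := Finset.sum_congr rfl fun j _ => by
            rw [abs_mul, hcabs j, one_mul, abs_of_nonneg (hpnn j u)]
        _ = 1 := hpsum u
    have hμF : ∀ n, μ n F = ∑ j : ↥I, c j * μ n (p j) := by
      intro n
      rw [hFdef, map_sum]
      exact Finset.sum_congr rfl fun j _ => by rw [map_smul]; simp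
    calc ∑ j : ↥I, |∑ n ∈ s, ε σ n * μ n (p j)|
        = ∑ j : ↥I, c j * ∑ n ∈ s, ε σ n * μ n (p j) := Finset.sum_congr rfl fun j _ => habs j
      _ = ∑ j : ↥I, ∑ n ∈ s, ε σ n * (c j * μ n (p j)) := by
          refine Finset.sum_congr rfl fun j _ => ?_
          rw [Finset.mul_sum]
          exact Finset.sum_congr rfl fun n _ => by ring
      _ = ∑ n ∈ s, ε σ n * ∑ j : ↥I, c j * μ n (p j) := by
          rw [Finset.sum_comm]
          exact Finset.sum_congr rfl fun n _ => by rw [Finset.mul_sum]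
      _ = ∑ n ∈ s, ε σ n * μ n F := by
          exact Finset.sum_congr rfl fun n _ => by rw [hμF n]
      _ ≤ ∑ n ∈ s, |ε σ n * μ n F| := Finset.sum_le_sum fun n _ => le_abs_self _
      _ = ∑ n ∈ s, |μ n F| := Finset.sum_congr rfl fun n _ => by
          rw [abs_mul, hεabs σ n, one_mul]
      _ ≤ τ * ‖F‖ := hsum F s
      _ ≤ τ := by
          have := mul_le_mul_of_nonneg_left hFnorm hT0.le
          simpa using this
  -- Khintchine inequality applied per column, then summed
  have hkh : ∀ j : ↥I, (2 ^ N : ℝ) * ∑ n ∈ s, |μ n (p j)|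
      ≤ Real.sqrt 3 * Real.sqrt N * ∑ σ ∈ s.powerset, |sgnsum s σ fun n => μ n (p j)| := by
    intro j
    have h1 := khintchine s (fun n => μ n (p j))
    rwa [hscard] at h1
  have hsum1 : (2 ^ N : ℝ) * ∑ j : ↥I, ∑ n ∈ s, |μ n (p j)|
      ≤ Real.sqrt 3 * Real.sqrt N
        * ∑ j : ↥I, ∑ σ ∈ s.powerset, |sgnsum s σ fun n => μ n (p j)| := by
    rw [Finset.mul_sum, Finset.mul_sum]
    exact Finset.sum_le_sum fun j _ => hkh j
  have hlhs : (N : ℝ) * (δ / 2) ≤ ∑ j : ↥I, ∑ n ∈ s, |μ n (p j)| := by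
    rw [Finset.sum_comm]
    calc (N : ℝ) * (δ / 2) = ∑ _n ∈ s, δ / 2 := by
          rw [Finset.sum_const, hscard, nsmul_eq_mul]
      _ ≤ ∑ n ∈ s, ∑ j : ↥I, |μ n (p j)| := Finset.sum_le_sum hd1
  have hrhs : ∑ j : ↥I, ∑ σ ∈ s.powerset, |sgnsum s σ fun n => μ n (p j)|
      ≤ 2 ^ N * τ := by
    rw [Finset.sum_comm]
    calc ∑ σ ∈ s.powerset, ∑ j : ↥I, |sgnsum s σ fun n => μ n (p j)|
        ≤ ∑ _σ ∈ s.powerset, τ := by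
          refine Finset.sum_le_sum fun σ hσ => ?_
          have h1 := hd2 σ hσ
          have h2 : ∀ j : ↥I, (sgnsum s σ fun n => μ n (p j))
              = ∑ n ∈ s, ε σ n * μ n (p j) := by
            intro j
            exact Finset.sum_congr rfl fun n _ => hεrw σ n _
          rw [Finset.sum_congr rfl fun j _ => by rw [h2 j]]
          exact h1
      _ = 2 ^ N * τ := by
          rw [Finset.sum_const, Finset.card_powerset, hscard, nsmul_eq_mul]
          push_cast; ring
  -- combine everything
  have hP2 : (0 : ℝ) < 2 ^ N := pow_pos (by norm_num) _
  have hmain : (2 ^ N : ℝ) * ((N : ℝ) * (δ / 2))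
      ≤ Real.sqrt 3 * Real.sqrt N * (2 ^ N * τ) := by
    calc (2 ^ N : ℝ) * ((N : ℝ) * (δ / 2))
        ≤ (2 ^ N : ℝ) * ∑ j : ↥I, ∑ n ∈ s, |μ n (p j)| :=
          mul_le_mul_of_nonneg_left hlhs hP2.le
      _ ≤ Real.sqrt 3 * Real.sqrt N
          * ∑ j : ↥I, ∑ σ ∈ s.powerset, |sgnsum s σ fun n => μ n (p j)| := hsum1
      _ ≤ Real.sqrt 3 * Real.sqrt N * (2 ^ N * τ) := by
          refine mul_le_mul_of_nonneg_left hrhs ?_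
          positivity
  have hdiv : (N : ℝ) * (δ / 2) ≤ Real.sqrt 3 * Real.sqrt N * τ := by
    have h1 : (2 ^ N : ℝ) * ((N : ℝ) * (δ / 2)) ≤ (2 ^ N : ℝ) * (Real.sqrt 3 * Real.sqrt N * τ) := by
      calc (2 ^ N : ℝ) * ((N : ℝ) * (δ / 2)) ≤ Real.sqrt 3 * Real.sqrt N * (2 ^ N * τ) := hmain
        _ = (2 ^ N : ℝ) * (Real.sqrt 3 * Real.sqrt N * τ) := by ring
    exact le_of_mul_le_mul_left h1 hP2
  -- square the inequality
  have hNpos : 0 < N := by rw [hNdef]; omega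
  have hNR : (0 : ℝ) < N := Nat.cast_pos.2 hNpos
  have hsq : ((N : ℝ) * (δ / 2)) ^ 2 ≤ 3 * N * τ ^ 2 := by
    have h0 : (0 : ℝ) ≤ (N : ℝ) * (δ / 2) := by positivity
    have h1 := pow_le_pow_left₀ h0 hdiv 2
    have h2 : (Real.sqrt 3 * Real.sqrt N * τ) ^ 2 = 3 * N * τ ^ 2 := by
      rw [mul_pow, mul_pow, Real.sq_sqrt (by norm_num : (0:ℝ) ≤ 3),
        Real.sq_sqrt (Nat.cast_nonneg N)]
    rwa [h2] at h1
  -- hence N ≤ 12 τ² ρ², contradicting the choice of N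
  have hNle : (N : ℝ) ≤ 12 * τ ^ 2 * ρ ^ 2 := by
    have h1 : (N : ℝ) ^ 2 * δ ^ 2 / 4 ≤ 3 * N * τ ^ 2 := by
      calc (N : ℝ) ^ 2 * δ ^ 2 / 4 = ((N : ℝ) * (δ / 2)) ^ 2 := by ring
        _ ≤ 3 * N * τ ^ 2 := hsq
    have h2 : (N : ℝ) * δ ^ 2 ≤ 12 * τ ^ 2 := by
      have h3 : (N : ℝ) * ((N : ℝ) * δ ^ 2) ≤ (N : ℝ) * (12 * τ ^ 2) := by
        ring_nf
        ring_nf at h1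
        linarith
      exact le_of_mul_le_mul_left h3 hNR
    have hδρ : δ ^ 2 * ρ ^ 2 = 1 := by
      rw [hδdef, ← mul_pow, inv_mul_cancel₀ hR0.ne', one_pow]
    calc (N : ℝ) = (N : ℝ) * (δ ^ 2 * ρ ^ 2) := by rw [hδρ, mul_one]
      _ = ((N : ℝ) * δ ^ 2) * ρ ^ 2 := by ring
      _ ≤ (12 * τ ^ 2) * ρ ^ 2 := by
          exact mul_le_mul_of_nonneg_right h2 (sq_nonneg ρ)
      _ = 12 * τ ^ 2 * ρ ^ 2 := by ring
  have hNgt : 12 * τ ^ 2 * ρ ^ 2 < (N : ℝ) := by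
    have h1 : (12 * τ ^ 2 * ρ ^ 2 : ℝ) ≤ ⌈12 * τ ^ 2 * ρ ^ 2⌉₊ := Nat.le_ceil _
    have h2 : ((⌈12 * τ ^ 2 * ρ ^ 2⌉₊ : ℝ)) < N := by
      rw [hNdef]; push_cast; linarith
    linarith
  linarith

end Main

/-- a Banach space containing a complemented copy of `ℓ_1` is not isomorphic to
a complemented subspace of any `C(K)` space. -/
theorem not_complemented_in_CK {X : Type*} [NormedAddCommGroup X] [NormedSpace ℝ X]
    [CompleteSpace X]
    (h : ∃ (Y : Submodule ℝ X) (P : X →L[ℝ] X), (∀ v, P v ∈ Y) ∧ (∀ v ∈ Y, P v = v) ∧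
      Nonempty (↥Y ≃L[ℝ] lp (fun _ : ℕ => ℝ) 1))
    (K : Type*) [TopologicalSpace K] [CompactSpace K] [T2Space K] :
    ¬ ∃ (Z : Submodule ℝ C(K, ℝ)) (Q : C(K, ℝ) →L[ℝ] C(K, ℝ)),
      (∀ v, Q v ∈ Z) ∧ (∀ v ∈ Z, Q v = v) ∧ Nonempty (↥Z ≃L[ℝ] X) := by
  rintro ⟨Z, Q, hQZ, hQid, ⟨e⟩⟩
  obtain ⟨Y, P, hPY, hPid, ⟨i⟩⟩ := h
  exact aux_no_ell1_complemented K Y P hPY hPid i Z Q hQZ hQid e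
end

section
/- Let A ⊂ ℝⁿ be a finite set and f : A → ℝ a 1-Lipschitz function (Euclidean norm). For every ε > 0 there exists g ∈ C¹(ℝⁿ) extending f with ‖g‖_∞ < max{‖f‖_∞, 1} + ε and g being (1 + ε)-Lipschitz (hence all partial derivatives bounded by 1 + ε in absolute value). -/
open MeasureTheory Metric Function
open scoped Convolution Topology NNReal

lemma finset_exists_sep {E : Type*} [MetricSpace E] (s : Finset E) :
    ∃ r : ℝ, 0 < r ∧ ∀ a ∈ s, ∀ b ∈ s, a ≠ b → r ≤ dist a b := by
  classical
  set T := (s ×ˢ s).filter (fun p => p.1 ≠ p.2) with hT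
  rcases T.eq_empty_or_nonempty with h | h
  · refine ⟨1, one_pos, fun a ha b hb hab => ?_⟩
    have hm : (a, b) ∈ T := Finset.mem_filter.mpr ⟨Finset.mem_product.mpr ⟨ha, hb⟩, hab⟩
    simp [h] at hm
  · refine ⟨T.inf' h (fun p => dist p.1 p.2), ?_, ?_⟩
    · rw [Finset.lt_inf'_iff]
      rintro ⟨a, b⟩ hp
      exact dist_pos.mpr (Finset.mem_filter.mp hp).2
    · intro a ha b hb hab
      have hm : (a, b) ∈ T := Finset.mem_filter.mpr ⟨Finset.mem_product.mpr ⟨ha, hb⟩, hab⟩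
      exact Finset.inf'_le _ hm

lemma lipschitz_of_contDiff_compactSupport {E : Type*} [NormedAddCommGroup E] [NormedSpace ℝ E]
    {f : E → ℝ} (hf : ContDiff ℝ 1 f) (h : HasCompactSupport f) :
    ∃ L : ℝ≥0, LipschitzWith L f := by
  obtain ⟨C, hC⟩ := (hf.continuous_fderiv one_ne_zero).bounded_above_of_compact_support (h.fderiv (𝕜 := ℝ))
  refine ⟨⟨max C 0, le_max_right _ _⟩, lipschitzWith_of_nnnorm_fderiv_le
    (fun x => hf.differentiable one_ne_zero x) (fun x => ?_)⟩
  refine NNReal.coe_le_coe.mp ?_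
  exact (hC x).trans (le_max_left _ _)

lemma lipschitz_const_mul {E : Type*} [PseudoMetricSpace E] {f : E → ℝ} {L : ℝ≥0}
    (h : LipschitzWith L f) (c : ℝ) : LipschitzWith (‖c‖₊ * L) (fun x => c * f x) := by
  refine LipschitzWith.of_dist_le_mul fun x y => ?_
  have : dist (c * f x) (c * f y) = |c| * dist (f x) (f y) := by
    rw [Real.dist_eq, Real.dist_eq, ← mul_sub, abs_mul]
  rw [this]
  push_cast
  rw [mul_assoc]
  exact mul_le_mul_of_nonneg_left (h.dist_le_mul x y) (abs_nonneg c)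

lemma lipschitzWith_finset_sum {ι E : Type*} [PseudoEMetricSpace E] (s : Finset ι)
    (f : ι → E → ℝ) (K : ι → ℝ≥0) (h : ∀ i ∈ s, LipschitzWith (K i) (f i)) :
    LipschitzWith (∑ i ∈ s, K i) (fun x => ∑ i ∈ s, f i x) := by
  classical
  induction s using Finset.induction with
  | empty => simpa using LipschitzWith.const (0 : ℝ)
  | @insert a t hnot ih =>
      simp only [Finset.sum_insert hnot]
      exact (h _ (Finset.mem_insert_self _ _)).add
        (ih fun i hi => h i (Finset.mem_insert_of_mem hi))

lemma conv_lipschitz {n : ℕ} (ψ : ContDiffBump (0 : EuclideanSpace ℝ (Fin n)))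
    {F : EuclideanSpace ℝ (Fin n) → ℝ} {K : ℝ≥0} (hF : LipschitzWith K F) {M : ℝ}
    (hM : ∀ x, |F x| ≤ M) :
    LipschitzWith K (ψ.normed volume ⋆[ContinuousLinearMap.lsmul ℝ ℝ, volume] F) := by
  have hFc : Continuous F := hF.continuous
  have hint : ∀ z : EuclideanSpace ℝ (Fin n),
      Integrable (fun t => ψ.normed volume t * F (z - t)) volume := by
    intro z
    have h1 : Integrable (fun t => F (z - t) * ψ.normed volume t) volume :=
      (ψ.integrable_normed).bdd_mul
        ((hFc.comp (continuous_const.sub continuous_id)).aestronglyMeasurable)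
        (c := M) (Filter.Eventually.of_forall fun t => by simpa [Real.norm_eq_abs] using hM (z - t))
    simpa [mul_comm] using h1
  refine LipschitzWith.of_dist_le_mul fun x y => ?_
  have hx : (ψ.normed volume ⋆[ContinuousLinearMap.lsmul ℝ ℝ, volume] F) x
      = ∫ t, ψ.normed volume t * F (x - t) := by
    rw [convolution_def]; simp [ContinuousLinearMap.lsmul_apply, smul_eq_mul]
  have hy : (ψ.normed volume ⋆[ContinuousLinearMap.lsmul ℝ ℝ, volume] F) y
      = ∫ t, ψ.normed volume t * F (y - t) := by
    rw [convolution_def]; simp [ContinuousLinearMap.lsmul_apply, smul_eq_mul]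
  rw [hx, hy, Real.dist_eq, ← integral_sub (hint x) (hint y)]
  have hbd : ∀ t, ‖ψ.normed volume t * F (x - t) - ψ.normed volume t * F (y - t)‖
      ≤ ψ.normed volume t * ((K : ℝ) * dist x y) := by
    intro t
    rw [← mul_sub, Real.norm_eq_abs, abs_mul, abs_of_nonneg (ψ.nonneg_normed t)]
    refine mul_le_mul_of_nonneg_left ?_ (ψ.nonneg_normed t)
    have := hF.dist_le_mul (x - t) (y - t)
    rwa [dist_sub_right, Real.dist_eq] at this
  have hb : |∫ t, (ψ.normed volume t * F (x - t) - ψ.normed volume t * F (y - t))|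
      ≤ ∫ t, ψ.normed volume t * ((K : ℝ) * dist x y) := by
    rw [← Real.norm_eq_abs]
    exact norm_integral_le_of_norm_le ((ψ.integrable_normed).mul_const _)
      (Filter.Eventually.of_forall hbd)
  refine hb.trans ?_
  rw [integral_mul_const, ψ.integral_normed, one_mul]

/-- `C¹`-extension of Lipschitz functions on finite subsets of `ℝⁿ`. -/
theorem c1_extension_finite (n : ℕ) (s : Finset (EuclideanSpace ℝ (Fin n))) (hs : s.Nonempty)
    (f : EuclideanSpace ℝ (Fin n) → ℝ) (hf : LipschitzOnWith 1 f ↑s) (ε : ℝ≥0) (hε : 0 < ε) :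
    ∃ g : EuclideanSpace ℝ (Fin n) → ℝ, ContDiff ℝ 1 g ∧ (∀ a ∈ s, g a = f a) ∧
      LipschitzWith (1 + ε) g ∧
      (∀ (x : EuclideanSpace ℝ (Fin n)) (i : Fin n),
        |fderiv ℝ g x (EuclideanSpace.single i 1)| ≤ 1 + (ε : ℝ)) ∧
      ∃ C : ℝ, C < max (s.sup' hs fun a => |f a|) 1 + ε ∧
        ∀ x, |g x| ≤ C := by
  classical
  set M' : ℝ := s.sup' hs fun a => |f a| with hM'
  have hM'0 : 0 ≤ M' := by
    obtain ⟨a, ha⟩ := hs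
    refine (abs_nonneg (f a)).trans ?_
    rw [hM']
    exact Finset.le_sup' (fun a => |f a|) ha
  have hfM : ∀ a ∈ s, |f a| ≤ M' := fun a ha => by
    rw [hM']; exact Finset.le_sup' (fun a => |f a|) ha
  -- the 1-Lipschitz bounded extension F
  set F₀ : EuclideanSpace ℝ (Fin n) → ℝ := fun x => s.inf' hs fun a => f a + dist x a with hF₀
  set F : EuclideanSpace ℝ (Fin n) → ℝ := fun x => min (F₀ x) M' with hFdef
  have hdistf : ∀ a ∈ s, ∀ b ∈ s, dist (f a) (f b) ≤ dist a b := by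
    intro a ha b hb
    have := hf.dist_le_mul a ha b hb
    simpa using this
  have hF₀lip : ∀ x y : EuclideanSpace ℝ (Fin n), F₀ x ≤ F₀ y + dist x y := by
    intro x y
    obtain ⟨a, ha, hay⟩ := s.exists_mem_eq_inf' hs fun a => f a + dist y a
    have h4 : F₀ y = f a + dist y a := hay
    have h2 : F₀ x ≤ f a + dist x a := Finset.inf'_le _ ha
    have h3 := dist_triangle x y a
    linarith
  have hFlip : LipschitzWith 1 F := by
    refine LipschitzWith.of_dist_le_mul fun x y => ?_
    rw [NNReal.coe_one, one_mul, Real.dist_eq, abs_sub_le_iff]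
    have h1 := hF₀lip x y
    have h2 := hF₀lip y x
    rw [dist_comm y x] at h2
    constructor <;>
      · simp only [hFdef, min_le_iff, le_min_iff]
        rcases le_total (F₀ x) M' with h | h <;> rcases le_total (F₀ y) M' with h' | h' <;>
          simp [min_eq_left, min_eq_right, h, h'] <;> linarith [dist_nonneg (x := x) (y := y)]
  have hFval : ∀ a ∈ s, F a = f a := by
    intro a ha
    have h1 : F₀ a = f a := by
      refine le_antisymm ?_ ?_
      · have h0 := Finset.inf'_le (fun b => f b + dist a b) ha
        simp only [dist_self, add_zero] at h0
        exact h0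
      · refine Finset.le_inf'_iff _ _ |>.mpr fun b hb => ?_
        have := hdistf a ha b hb
        rw [Real.dist_eq] at this
        have := abs_sub_le_iff.mp this
        linarith [this.1]
    rw [hFdef]
    simp only [h1]
    exact min_eq_left ((le_abs_self _).trans (hfM a ha))
  have hFbd : ∀ x, |F x| ≤ M' := by
    intro x
    rw [abs_le]
    constructor
    · rw [hFdef, le_min_iff]
      refine ⟨?_, by linarith⟩
      refine Finset.le_inf'_iff _ _ |>.mpr fun b hb => ?_
      have h1 : -M' ≤ f b := by
        have := hfM b hb
        rw [abs_le] at this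
        linarith [this.1]
      linarith [dist_nonneg (x := x) (y := b)]
    · exact min_le_right _ _
  -- separation radius and the bump φ₀
  obtain ⟨r, hr0, hrsep⟩ := finset_exists_sep s
  set φ₀ : ContDiffBump (0 : EuclideanSpace ℝ (Fin n)) := ⟨r / 2, r, by linarith, by linarith⟩ with hφ₀
  obtain ⟨L, hL⟩ := lipschitz_of_contDiff_compactSupport
    (φ₀.contDiff (n := 1)) φ₀.hasCompactSupport
  -- choice of δ
  set N : ℝ := (s.card : ℝ) with hN
  have hN0 : 0 ≤ N := Nat.cast_nonneg _
  set δ : ℝ := (ε : ℝ) / (N * L + N + 2) with hδdef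
  have hden : (0:ℝ) < N * L + N + 2 := by positivity
  have hδ0 : 0 < δ := div_pos hε hden
  have hδD : δ * (N * (L:ℝ) + N + 2) = (ε:ℝ) := by
    rw [hδdef]; field_simp
  have hNL0 : (0:ℝ) ≤ N * (L:ℝ) := mul_nonneg hN0 (NNReal.coe_nonneg L)
  have hNLδ0 : (0:ℝ) ≤ N * (L:ℝ) * δ := mul_nonneg hNL0 hδ0.le
  have hδ1 : N * (L : ℝ) * δ ≤ (ε : ℝ) := by nlinarith
  have hδ2 : (N + 1) * δ < (ε : ℝ) := by nlinarith
  -- mollification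
  set ψ : ContDiffBump (0 : EuclideanSpace ℝ (Fin n)) := ⟨δ / 2, δ, by linarith, by linarith⟩ with hψ
  set G : EuclideanSpace ℝ (Fin n) → ℝ := ψ.normed volume ⋆[ContinuousLinearMap.lsmul ℝ ℝ, volume] F with hGdef
  have hGlip : LipschitzWith 1 G := conv_lipschitz ψ hFlip hFbd
  have hGsmooth : ContDiff ℝ 1 G :=
    HasCompactSupport.contDiff_convolution_left _ ψ.hasCompactSupport_normed
      (ψ.contDiff_normed (n := 1)) (hFlip.continuous.locallyIntegrable)
  have hGclose : ∀ x, |G x - F x| ≤ δ := by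
    intro x
    have := ContDiffBump.dist_normed_convolution_le (φ := ψ) (μ := volume)
      hFlip.continuous.aestronglyMeasurable (x₀ := x) (ε := δ) ?_
    · rwa [Real.dist_eq] at this
    · intro y hy
      have h1 := hFlip.dist_le_mul y x
      rw [NNReal.coe_one, one_mul] at h1
      have : dist y x < δ := by simpa [hψ] using hy
      linarith
  -- correction term
  set h : EuclideanSpace ℝ (Fin n) → ℝ := fun x => ∑ a ∈ s, (f a - G a) * φ₀ (x - a) with hh
  set g : EuclideanSpace ℝ (Fin n) → ℝ := fun x => G x + h x with hg
  have hcoef : ∀ a ∈ s, |f a - G a| ≤ δ := by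
    intro a ha
    have := hGclose a
    rw [hFval a ha] at this
    rw [abs_sub_comm]
    exact this
  have hφ₀self : φ₀ (0 : EuclideanSpace ℝ (Fin n)) = 1 :=
    φ₀.one_of_mem_closedBall (by simp [hφ₀]; positivity)
  have hφ₀zero : ∀ a ∈ s, ∀ b ∈ s, a ≠ b → φ₀ (a - b) = 0 := by
    intro a ha b hb hab
    refine φ₀.zero_of_le_dist ?_
    have : dist (a - b) (0 : EuclideanSpace ℝ (Fin n)) = dist a b := by simp [dist_eq_norm]
    rw [this]
    exact hrsep a ha b hb hab
  have hgval : ∀ a ∈ s, g a = f a := by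
    intro a ha
    have hsum : h a = f a - G a := by
      show (∑ b ∈ s, (f b - G b) * φ₀ (a - b)) = f a - G a
      rw [Finset.sum_eq_single a]
      · simp [sub_self, hφ₀self]
      · intro b hb hba
        rw [hφ₀zero a ha b hb (Ne.symm hba), mul_zero]
      · intro hna; exact absurd ha hna
    rw [hg]
    simp only [hsum]
    ring
  -- Lipschitz bound for g
  have htermlip : ∀ a ∈ s, LipschitzWith (‖f a - G a‖₊ * L) (fun x => (f a - G a) * φ₀ (x - a)) := by
    intro a _
    have htr : LipschitzWith L (fun x : EuclideanSpace ℝ (Fin n) => φ₀ (x - a)) := by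
      have h1 : LipschitzWith 1 (fun x : EuclideanSpace ℝ (Fin n) => x - a) :=
        LipschitzWith.of_dist_le_mul fun u v => by
          rw [dist_sub_right, NNReal.coe_one, one_mul]
      have := hL.comp h1
      rw [mul_one] at this
      exact this
    exact lipschitz_const_mul htr _
  have hhlip : LipschitzWith (∑ a ∈ s, ‖f a - G a‖₊ * L) h :=
    lipschitzWith_finset_sum s _ _ htermlip
  have hsumle : ((∑ a ∈ s, ‖f a - G a‖₊ * L : ℝ≥0) : ℝ) ≤ (ε : ℝ) := by
    push_cast
    calc (∑ a ∈ s, (‖f a - G a‖ * (L:ℝ))) ≤ ∑ a ∈ s, δ * (L:ℝ) := by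
          refine Finset.sum_le_sum fun a ha => ?_
          exact mul_le_mul_of_nonneg_right (by simpa [Real.norm_eq_abs] using hcoef a ha)
            (NNReal.coe_nonneg L)
      _ = N * (L:ℝ) * δ := by
          rw [Finset.sum_const, nsmul_eq_mul, hN]; ring
      _ ≤ (ε : ℝ) := hδ1
  have hglip : LipschitzWith (1 + ε) g := by
    have := hGlip.add hhlip
    refine this.weaken ?_
    refine add_le_add_right ?_ 1
    rw [← NNReal.coe_le_coe]
    exact hsumle
  -- smoothness
  have hgsmooth : ContDiff ℝ 1 g := by
    refine hGsmooth.add ?_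
    refine ContDiff.sum fun a _ => ?_
    exact contDiff_const.mul ((φ₀.contDiff (n := 1)).comp (contDiff_id.sub contDiff_const))
  -- derivative bound
  have hderiv : ∀ (x : EuclideanSpace ℝ (Fin n)) (i : Fin n), |fderiv ℝ g x (EuclideanSpace.single i 1)| ≤ 1 + (ε : ℝ) := by
    intro x i
    have h1 : ‖fderiv ℝ g x‖ ≤ ((1 + ε : ℝ≥0) : ℝ) := norm_fderiv_le_of_lipschitz ℝ hglip
    have h2 : |fderiv ℝ g x (EuclideanSpace.single i 1)|
        ≤ ‖fderiv ℝ g x‖ * ‖EuclideanSpace.single i (1:ℝ)‖ := by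
      rw [← Real.norm_eq_abs]
      exact (fderiv ℝ g x).le_opNorm _
    rw [EuclideanSpace.norm_single, norm_one, mul_one] at h2
    push_cast at h1
    linarith
  -- sup bound
  refine ⟨g, hgsmooth, hgval, hglip, hderiv, M' + (N + 1) * δ, ?_, ?_⟩
  · have : M' ≤ max M' 1 := le_max_left _ _
    linarith
  · intro x
    have hhbd : |h x| ≤ N * δ := by
      rw [hh]
      calc |∑ a ∈ s, (f a - G a) * φ₀ (x - a)| ≤ ∑ a ∈ s, |(f a - G a) * φ₀ (x - a)| :=
            Finset.abs_sum_le_sum_abs _ _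
        _ ≤ ∑ a ∈ s, δ := by
            refine Finset.sum_le_sum fun a ha => ?_
            rw [abs_mul]
            calc |f a - G a| * |φ₀ (x - a)| ≤ δ * 1 := by
                  refine mul_le_mul (hcoef a ha) ?_ (abs_nonneg _) (le_of_lt hδ0)
                  rw [abs_of_nonneg (φ₀.nonneg)]
                  exact φ₀.le_one
              _ = δ := mul_one δ
        _ = N * δ := by rw [Finset.sum_const, nsmul_eq_mul, hN]
    have hGbd : |G x| ≤ M' + δ := by
      have h1 := hGclose x
      have h2 := hFbd x
      rw [abs_le] at *
      constructor <;> linarith [h1.1, h1.2, h2.1, h2.2]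
    rw [hg]
    have := abs_add_le (G x) (h x)
    simp only []
    calc |G x + h x| ≤ |G x| + |h x| := abs_add_le _ _
      _ ≤ (M' + δ) + N * δ := add_le_add hGbd hhbd
      _ = M' + (N + 1) * δ := by ring
end
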